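/- arXiv:2402.18904 — 2 statements merged into one kernel-verified Lean document; each statement's English description precedes it below -/
import Mathlib

section
/- Let T1 and T2 be independent identically distributed real random variables, each symmetric about 0 with P(T1 = 0) = 0. Then the mirror statistic M = sign(T1·T2)(|T1| + |T2|) is symmetric about 0. -/
open MeasureTheory ProbabilityTheory

lemma measurable_real_sign : Measurable Real.sign := by
  unfold Real.sign
  exact Measurable.ite measurableSet_Iio measurable_const
    (Measurable.ite measurableSet_Ioi measurable_const measurable_const)

theorem stmt_14 {Ω : Type*} [MeasurableSpace Ω] (μ : Measure Ω) [IsProbabilityMeasure μ]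
    (T1 T2 : Ω → ℝ) (hT1 : Measurable T1) (hT2 : Measurable T2)
    (hindep : IndepFun T1 T2 μ)
    (hiid : μ.map T1 = μ.map T2)
    (hsym : μ.map T1 = μ.map (fun ω => -T1 ω))
    (hzero : μ {ω | T1 ω = 0} = 0) :
    μ.map (fun ω => Real.sign (T1 ω * T2 ω) * (|T1 ω| + |T2 ω|)) =
      μ.map (fun ω => -(Real.sign (T1 ω * T2 ω) * (|T1 ω| + |T2 ω|))) := by
  set f : ℝ × ℝ → ℝ := fun p => Real.sign (p.1 * p.2) * (|p.1| + |p.2|) with hf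
  have hfm : Measurable f := by
    exact (measurable_real_sign.comp (measurable_fst.mul measurable_snd)).mul
      (measurable_fst.abs.add measurable_snd.abs)
  have hindep' : IndepFun (fun ω => -T1 ω) T2 μ :=
    hindep.comp measurable_neg measurable_id
  have hpair : μ.map (fun ω => (T1 ω, T2 ω)) = μ.map (fun ω => (-T1 ω, T2 ω)) := by
    rw [(indepFun_iff_map_prod_eq_prod_map_map hT1.aemeasurable hT2.aemeasurable).mp hindep,
      (indepFun_iff_map_prod_eq_prod_map_map (show AEMeasurable (fun ω => -T1 ω) μ from hT1.neg.aemeasurable) hT2.aemeasurable).mp hindep',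
      ← hsym]
  have h1 : μ.map (fun ω => Real.sign (T1 ω * T2 ω) * (|T1 ω| + |T2 ω|)) =
      (μ.map (fun ω => (T1 ω, T2 ω))).map f := by
    rw [Measure.map_map hfm (hT1.prodMk hT2)]; rfl
  have h2 : (μ.map (fun ω => (-T1 ω, T2 ω))).map f =
      μ.map (fun ω => -(Real.sign (T1 ω * T2 ω) * (|T1 ω| + |T2 ω|))) := by
    rw [Measure.map_map hfm (show Measurable (fun ω => (-T1 ω, T2 ω)) from hT1.neg.prodMk hT2)]
    congr 1
    funext ω
    show Real.sign (-T1 ω * T2 ω) * (|-T1 ω| + |T2 ω|) = _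
    rw [neg_mul, Real.sign_neg, abs_neg, neg_mul]
  rw [h1, hpair, h2]
end

section
/- Let (T1, T2) and (T1', T2') be two independent copies of a planar random vector whose two coordinates are independent, each symmetric about 0, and almost surely nonzero. Writing each vector in polar coordinates (r, θ) and (r', θ'), the statistic M = cos(θ - θ')·r·r' is symmetric about 0 — that is, P(M > t) = P(M < -t) for all t > 0. -/
open MeasureTheory ProbabilityTheory

/-- The unified mirror statistic `M = cos (θ - θ') * r * r'` is the Euclidean inner product
`T1 * T1' + T2 * T2'` of the two planar vectors; under the null it is symmetric about 0. -/
theorem stmt_15 {Ω : Type*} [MeasurableSpace Ω] (μ : Measure Ω) [IsProbabilityMeasure μ]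
    (T1 T2 T1' T2' : Ω → ℝ)
    (hT1 : Measurable T1) (hT2 : Measurable T2)
    (hT1' : Measurable T1') (hT2' : Measurable T2')
    -- each vector has independent coordinates
    (hcoord : IndepFun T1 T2 μ) (hcoord' : IndepFun T1' T2' μ)
    -- each coordinate is symmetric about 0
    (hsym1 : μ.map T1 = μ.map (fun ω => -T1 ω))
    (hsym2 : μ.map T2 = μ.map (fun ω => -T2 ω))
    (hsym1' : μ.map T1' = μ.map (fun ω => -T1' ω))
    (hsym2' : μ.map T2' = μ.map (fun ω => -T2' ω))
    -- the two vectors are independent copies of each other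
    (hvecindep : IndepFun (fun ω => (T1 ω, T2 ω)) (fun ω => (T1' ω, T2' ω)) μ)
    (hcopy : μ.map (fun ω => (T1 ω, T2 ω)) = μ.map (fun ω => (T1' ω, T2' ω)))
    -- almost surely nonzero
    (hne : ∀ᵐ ω ∂μ, (T1 ω, T2 ω) ≠ (0, 0))
    (hne' : ∀ᵐ ω ∂μ, (T1' ω, T2' ω) ≠ (0, 0)) :
    ∀ t : ℝ, 0 < t →
      μ {ω | T1 ω * T1' ω + T2 ω * T2' ω > t} =
        μ {ω | T1 ω * T1' ω + T2 ω * T2' ω < -t} := by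
  intro t ht
  set M : Ω → ℝ := fun ω => T1 ω * T1' ω + T2 ω * T2' ω with hMdef
  have hMmeas : Measurable M := (hT1.mul hT1').add (hT2.mul hT2')
  have hnT1 : Measurable (fun ω => -T1 ω) := hT1.neg
  have hnT2 : Measurable (fun ω => -T2 ω) := hT2.neg
  have hindep_neg : IndepFun (fun ω => -T1 ω) (fun ω => -T2 ω) μ :=
    hcoord.comp measurable_neg measurable_neg
  have h1 : μ.map (fun ω => (T1 ω, T2 ω)) = μ.map (fun ω => (-T1 ω, -T2 ω)) := by
    rw [(indepFun_iff_map_prod_eq_prod_map_map hT1.aemeasurable hT2.aemeasurable).mp hcoord,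
        (indepFun_iff_map_prod_eq_prod_map_map hnT1.aemeasurable hnT2.aemeasurable).mp hindep_neg,
        hsym1, hsym2]
  have hV : Measurable (fun ω => (T1 ω, T2 ω)) := hT1.prodMk hT2
  have hnV : Measurable (fun ω => (-T1 ω, -T2 ω)) := hnT1.prodMk hnT2
  have hV' : Measurable (fun ω => (T1' ω, T2' ω)) := hT1'.prodMk hT2'
  have hvec_neg : IndepFun (fun ω => (-T1 ω, -T2 ω)) (fun ω => (T1' ω, T2' ω)) μ :=
    hvecindep.comp (Measurable.prodMap measurable_neg measurable_neg) measurable_id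
  have h2 : μ.map (fun ω => ((T1 ω, T2 ω), (T1' ω, T2' ω)))
      = μ.map (fun ω => ((-T1 ω, -T2 ω), (T1' ω, T2' ω))) := by
    rw [(indepFun_iff_map_prod_eq_prod_map_map hV.aemeasurable hV'.aemeasurable).mp hvecindep,
        (indepFun_iff_map_prod_eq_prod_map_map hnV.aemeasurable hV'.aemeasurable).mp hvec_neg, h1]
  set g : (ℝ × ℝ) × (ℝ × ℝ) → ℝ := fun p => p.1.1 * p.2.1 + p.1.2 * p.2.2 with hgdef
  have hgmeas : Measurable g := by
    apply Measurable.add <;> apply Measurable.mul <;> fun_prop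
  have hmap : μ.map M = μ.map (fun ω => -M ω) := by
    have e1 : μ.map M = (μ.map (fun ω => ((T1 ω, T2 ω), (T1' ω, T2' ω)))).map g := by
      rw [Measure.map_map hgmeas (hV.prodMk hV')]; rfl
    have e2 : μ.map (fun ω => -M ω)
        = (μ.map (fun ω => ((-T1 ω, -T2 ω), (T1' ω, T2' ω)))).map g := by
      rw [Measure.map_map hgmeas (hnV.prodMk hV')]
      congr 1; funext ω; simp only [Function.comp, hgdef, hMdef]; ring
    rw [e1, e2, h2]
  have hL : μ {ω | M ω > t} = μ.map M (Set.Ioi t) := by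
    rw [Measure.map_apply hMmeas measurableSet_Ioi]; rfl
  rw [hL, hmap, Measure.map_apply (f := fun ω => -M ω) hMmeas.neg measurableSet_Ioi]
  congr 1
  ext ω
  simp only [Set.mem_preimage, Set.mem_Ioi, Set.mem_setOf_eq, hMdef]
  constructor <;> intro h <;> linarith
end
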